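/- Let k be a commutative ring and V a free k-module of finite rank r ≥ 2. For any τ ∈ V^∨, the generalized supertrace of the contraction operator ι_τ on ⋀V (the odd superderivation of degree −1 extending τ: V → k) is zero: Tr_Λ(ι_τ) = 0. -/

import Mathlib

open ExteriorAlgebra

variable (k : Type*) [CommRing k] (V : Type*) [AddCommGroup V] [Module k V]

-- the grading involution ε : +1 on even part, −1 on odd part
noncomputable def eps : ExteriorAlgebra k V →ₐ[k] ExteriorAlgebra k V :=
  ExteriorAlgebra.lift k ⟨-(ExteriorAlgebra.ι k (M := V)), fun m => by
    simp [ExteriorAlgebra.ι_sq_zero]⟩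

-- the supertrace
noncomputable def strs (φ : Module.End k (ExteriorAlgebra k V)) : k :=
  LinearMap.trace k _ ((eps k V).toLinearMap ∘ₗ φ)

-- projection onto the degree-n graded component
noncomputable def pr (n : ℕ) : ExteriorAlgebra k V →ₗ[k] ⋀[k]^n V :=
  (DirectSum.component k ℕ (fun i => (⋀[k]^i V : Submodule k (ExteriorAlgebra k V))) n) ∘ₗ
    (DirectSum.decomposeLinearEquiv (fun i : ℕ => (⋀[k]^i V : Submodule k (ExteriorAlgebra k V)))).toLinearMap

noncomputable def prEnd (n : ℕ) : Module.End k (ExteriorAlgebra k V) :=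
  (Submodule.subtype _) ∘ₗ pr k V n

-- the degree-d homogeneous component of an endomorphism
noncomputable def cpt (d : ℤ) (φ : Module.End k (ExteriorAlgebra k V)) :
    Module.End k (ExteriorAlgebra k V) :=
  ∑ m ∈ Finset.range (Module.finrank k V + 1),
    if 0 ≤ (m : ℤ) + d then prEnd k V ((m : ℤ) + d).toNat ∘ₗ φ ∘ₗ prEnd k V m else 0

-- generalized supertrace of a degree-(−n) homogeneous endomorphism
noncomputable def TrHom (n : ℕ) (φ : Module.End k (ExteriorAlgebra k V)) :
    Module.Dual k (⋀[k]^n V) where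
  toFun η := (-1 : k) ^ n * strs k V ((LinearMap.mulLeft k (η : ExteriorAlgebra k V)) ∘ₗ φ)
  map_add' x y := by
    have h : ∀ a b : ExteriorAlgebra k V, LinearMap.mulLeft k (a + b) =
        LinearMap.mulLeft k a + LinearMap.mulLeft k b := fun a b => by
      ext z; simp [add_mul]
    simp [h, strs, LinearMap.comp_add, LinearMap.add_comp, mul_add]
  map_smul' c x := by
    have h : ∀ (c : k) (a : ExteriorAlgebra k V), LinearMap.mulLeft k (c • a) =
        c • LinearMap.mulLeft k a := fun c a => by
      ext z; simp [smul_mul_assoc]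
    simp [h, strs, LinearMap.comp_smul, LinearMap.smul_comp]
    ring

-- generalized supertrace of an arbitrary endomorphism, at level n
noncomputable def TrGen (n : ℕ) (φ : Module.End k (ExteriorAlgebra k V)) :
    Module.Dual k (⋀[k]^n V) :=
  TrHom k V n (cpt k V (-(n : ℤ)) φ)

-- the embedding i : ⋀ V^∨ → End(⋀ V)
noncomputable def iEmb (n : ℕ) (α : Module.Dual k (⋀[k]^n V)) :
    Module.End k (ExteriorAlgebra k V) :=
  (Algebra.linearMap k (ExteriorAlgebra k V)) ∘ₗ α ∘ₗ pr k V n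

-- i ∘ Tr_Λ as a single endomorphism, and its even/odd parts
noncomputable def iTr (φ : Module.End k (ExteriorAlgebra k V)) :
    Module.End k (ExteriorAlgebra k V) :=
  ∑ n ∈ Finset.range (Module.finrank k V + 1), iEmb k V n (TrGen k V n φ)

noncomputable def iTrEven (φ : Module.End k (ExteriorAlgebra k V)) :
    Module.End k (ExteriorAlgebra k V) :=
  ∑ n ∈ Finset.range (Module.finrank k V + 1),
    if Even n then iEmb k V n (TrGen k V n φ) else 0

noncomputable def iTrOdd (φ : Module.End k (ExteriorAlgebra k V)) :
    Module.End k (ExteriorAlgebra k V) :=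
  ∑ n ∈ Finset.range (Module.finrank k V + 1),
    if ¬ Even n then iEmb k V n (TrGen k V n φ) else 0

-- parity submodules
noncomputable def evenSub : Submodule k (ExteriorAlgebra k V) :=
  ⨆ n : ℕ, ⋀[k]^(2 * n) V

noncomputable def oddSub : Submodule k (ExteriorAlgebra k V) :=
  ⨆ n : ℕ, ⋀[k]^(2 * n + 1) V

def IsEvenMap (f : Module.End k (ExteriorAlgebra k V)) : Prop :=
  (∀ x ∈ evenSub k V, f x ∈ evenSub k V) ∧ (∀ x ∈ oddSub k V, f x ∈ oddSub k V)

def IsOddMap (f : Module.End k (ExteriorAlgebra k V)) : Prop :=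
  (∀ x ∈ evenSub k V, f x ∈ oddSub k V) ∧ (∀ x ∈ oddSub k V, f x ∈ evenSub k V)

def IsEvenDeriv (δ : Module.End k (ExteriorAlgebra k V)) : Prop :=
  IsEvenMap k V δ ∧ ∀ x y : ExteriorAlgebra k V, δ (x * y) = δ x * y + x * δ y

def IsOddDeriv (δ : Module.End k (ExteriorAlgebra k V)) : Prop :=
  IsOddMap k V δ ∧
  (∀ x ∈ evenSub k V, ∀ y : ExteriorAlgebra k V, δ (x * y) = δ x * y + x * δ y) ∧
  (∀ x ∈ oddSub k V, ∀ y : ExteriorAlgebra k V, δ (x * y) = δ x * y - x * δ y)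

-- supercommutator of parity-decomposed endomorphisms, [a₀+a₁, b₀+b₁]ₛ
def sComm (a₀ a₁ b₀ b₁ : Module.End k (ExteriorAlgebra k V)) :
    Module.End k (ExteriorAlgebra k V) :=
  (a₀ * b₀ - b₀ * a₀) + (a₀ * b₁ - b₁ * a₀) + (a₁ * b₀ - b₀ * a₁) + (a₁ * b₁ + b₁ * a₁)

def IsHomogeneousOfDegree (d : ℤ) (φ : Module.End k (ExteriorAlgebra k V)) : Prop :=
  ∀ m : ℕ, ∀ x ∈ ⋀[k]^m V,
    (∀ m' : ℕ, (m' : ℤ) = (m : ℤ) + d → φ x ∈ ⋀[k]^m' V) ∧ ((m : ℤ) + d < 0 → φ x = 0)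

section AuxSupertrace

variable {k V}

lemma eps_ι (v : V) : eps k V (ExteriorAlgebra.ι k v) = -(ExteriorAlgebra.ι k v) := by
  rw [eps, ExteriorAlgebra.lift_ι_apply]; rfl

lemma eps_contract (τ : Module.Dual k V) (x : ExteriorAlgebra k V) :
    eps k V (CliffordAlgebra.contractLeft (Q := (0 : QuadraticForm k V)) τ x)
      = -(CliffordAlgebra.contractLeft (Q := (0 : QuadraticForm k V)) τ (eps k V x)) := by
  induction x using CliffordAlgebra.left_induction with
  | algebraMap r =>
      simp [CliffordAlgebra.contractLeft_algebraMap]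
  | add x y hx hy =>
      simp only [map_add, hx, hy, neg_add]
  | ι_mul x m hx =>
      rw [CliffordAlgebra.contractLeft_ι_mul, map_sub, map_smul, map_mul, hx, map_mul]
      have h1 : eps k V (CliffordAlgebra.ι (0 : QuadraticForm k V) m)
          = -(CliffordAlgebra.ι (0 : QuadraticForm k V) m) := eps_ι m
      rw [h1, neg_mul, neg_mul, map_neg, CliffordAlgebra.contractLeft_ι_mul]
      simp only [map_neg, mul_neg, neg_neg, neg_sub, sub_neg_eq_add]


variable (k V)

noncomputable def Eop : Module.End k (ExteriorAlgebra k V) := (eps k V).toLinearMap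

noncomputable def Aop (v : V) : Module.End k (ExteriorAlgebra k V) :=
  LinearMap.mulLeft k (ExteriorAlgebra.ι k v)

noncomputable def Cop (τ : Module.Dual k V) : Module.End k (ExteriorAlgebra k V) :=
  CliffordAlgebra.contractLeft (Q := (0 : QuadraticForm k V)) τ

variable {k V}

lemma hCE (τ : Module.Dual k V) (Z : Module.End k (ExteriorAlgebra k V)) :
    Cop k V τ * (Eop k V * Z) = -(Eop k V * (Cop k V τ * Z)) := by
  refine LinearMap.ext fun x => ?_
  simp only [Module.End.mul_apply, LinearMap.neg_apply, Cop, Eop, AlgHom.toLinearMap_apply]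
  rw [eps_contract, neg_neg]

lemma hCA (τ : Module.Dual k V) (v : V) (Z : Module.End k (ExteriorAlgebra k V)) :
    Cop k V τ * (Aop k V v * Z) = τ v • Z - Aop k V v * (Cop k V τ * Z) := by
  refine LinearMap.ext fun x => ?_
  simp only [Module.End.mul_apply, LinearMap.sub_apply, LinearMap.smul_apply, Cop, Aop,
    LinearMap.mulLeft_apply]
  rw [CliffordAlgebra.contractLeft_ι_mul]

lemma hCC (τ σ : Module.Dual k V) :
    Cop k V τ * Cop k V σ = -(Cop k V σ * Cop k V τ) := by
  refine LinearMap.ext fun x => ?_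
  simp only [Module.End.mul_apply, LinearMap.neg_apply, Cop]
  rw [CliffordAlgebra.contractLeft_comm]

lemma opid (τ σ : Module.Dual k V) (v w : V) :
    Cop k V τ * (Eop k V * Aop k V v * Aop k V w * Cop k V σ)
      = τ w • (Eop k V * Aop k V v * Cop k V σ) - τ v • (Eop k V * Aop k V w * Cop k V σ)
        + Eop k V * Aop k V v * Aop k V w * Cop k V σ * Cop k V τ := by
  have h4 := hCC (k := k) (V := V) τ σ
  simp only [mul_assoc]
  rw [hCE, hCA, hCA, h4]
  simp only [mul_sub, mul_add, mul_smul_comm, mul_neg, sub_neg_eq_add, neg_add, neg_neg,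
    neg_sub, sub_eq_add_neg]
  have hn : ∀ A B : Module.End k (ExteriorAlgebra k V), A * -B = -(A * B) := fun A B => LinearMap.ext fun x => map_neg A (B x)
  simp only [hn, neg_neg, neg_add, mul_smul_comm]
  abel

lemma key (τ σ : Module.Dual k V) (v w : V) :
    τ v • LinearMap.trace k _ (Eop k V * Aop k V w * Cop k V σ)
      = τ w • LinearMap.trace k _ (Eop k V * Aop k V v * Cop k V σ) := by
  have e1 := LinearMap.trace_mul_comm k (Eop k V * Aop k V v * Aop k V w * Cop k V σ) (Cop k V τ)
  rw [opid] at e1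
  simp only [map_add, map_sub, map_smul, smul_eq_mul] at e1 ⊢
  linear_combination e1

variable (k V)

end AuxSupertrace

/-- If `V` is free of rank `r ≥ 2` then for any `τ ∈ V^∨` the generalized
supertrace of the contraction operator `ι_τ` on `⋀ V` is zero. -/
theorem generalized_supertrace_contraction_eq_zero
    [Module.Free k V] [Module.Finite k V] (r : ℕ) (hr : Module.finrank k V = r) (h2r : 2 ≤ r)
    (τ : Module.Dual k V) :
    TrHom k V 1
      (CliffordAlgebra.contractLeft (Q := (0 : QuadraticForm k V)) τ :
        Module.End k (ExteriorAlgebra k V)) = 0 := by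
  classical
  cases subsingleton_or_nontrivial k with
  | inl h => exact Subsingleton.elim _ _
  | inr h => ?_
  set b := Module.Free.chooseBasis k V with hb
  have hcard : 1 < Fintype.card (Module.Free.ChooseBasisIndex k V) := by
    have := Module.finrank_eq_card_chooseBasisIndex (R := k) (M := V)
    omega
  have Tzero : ∀ v : V,
      LinearMap.trace k _ (Eop k V * Aop k V v * Cop k V τ) = 0 := by
    have hAadd : ∀ a c : V, Aop k V (a + c) = Aop k V a + Aop k V c := fun a c => by
      refine LinearMap.ext fun z => ?_
      simp [Aop, add_mul]
    have hAsmul : ∀ (c : k) (a : V), Aop k V (c • a) = c • Aop k V a := fun c a => by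
      refine LinearMap.ext fun z => ?_
      simp [Aop, smul_mul_assoc]
    set L : V →ₗ[k] k :=
      { toFun := fun v => LinearMap.trace k _ (Eop k V * Aop k V v * Cop k V τ)
        map_add' := fun a c => by
          rw [hAadd]
          simp only [mul_add, add_mul, map_add]
        map_smul' := fun c a => by
          rw [hAsmul]
          simp only [mul_smul_comm, smul_mul_assoc, map_smul, RingHom.id_apply] } with hL
    have hL0 : L = 0 := by
      apply b.ext
      intro i
      obtain ⟨j, hj⟩ := Fintype.exists_ne_of_one_lt_card hcard i
      have hk := key (b.coord j) τ (b j) (b i)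
      have h1 : b.coord j (b i) = 0 := by
        rw [Module.Basis.coord_apply, Module.Basis.repr_self, Finsupp.single_apply]
        simp [Ne.symm hj]
      have h2 : b.coord j (b j) = 1 := by
        rw [Module.Basis.coord_apply, Module.Basis.repr_self, Finsupp.single_apply]
        simp
      rw [h1, h2, zero_smul, one_smul] at hk
      simpa [hL] using hk
    intro v
    have := congrFun (congrArg DFunLike.coe hL0) v
    simpa [hL] using this
  refine LinearMap.ext fun η => ?_
  obtain ⟨v, hv⟩ : ∃ v : V, ExteriorAlgebra.ι k v = (η : ExteriorAlgebra k V) := by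
    have hη : (η : ExteriorAlgebra k V) ∈
        (LinearMap.range (ExteriorAlgebra.ι k : V →ₗ[k] ExteriorAlgebra k V)) ^ 1 := η.2
    rw [pow_one] at hη
    exact hη
  have h0 : (TrHom k V 1 (CliffordAlgebra.contractLeft (Q := (0 : QuadraticForm k V)) τ :
      Module.End k (ExteriorAlgebra k V))) η
      = (-1 : k) ^ 1 * LinearMap.trace k _ (Eop k V * Aop k V v * Cop k V τ) := by
    show (-1 : k) ^ 1 * strs k V ((LinearMap.mulLeft k (η : ExteriorAlgebra k V)) ∘ₗ _) = _
    rw [← hv]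
    congr 1
  rw [h0, Tzero v]
  simp
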